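/- arXiv:2006.02922 — 3 statements merged into one kernel-verified Lean document; each statement's English description precedes it below -/
import Mathlib

section
/- The subring of the polynomial ring F_3[y,z] invariant under the F_3-algebra automorphism sending y ↦ y+z and z ↦ z is the polynomial subring F_3[z, c], where c = y^3 − y·z^2 = y(y+z)(y−z). -/
open MvPolynomial

/-- The `F₃`-algebra automorphism of `F₃[y,z]` with `y ↦ y + z`, `z ↦ z`
(here `y = X 0`, `z = X 1`). -/
noncomputable def sigmaYZ : MvPolynomial (Fin 2) (ZMod 3) →ₐ[ZMod 3] MvPolynomial (Fin 2) (ZMod 3) :=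
  aeval ![X 0 + X 1, X 1]

namespace StmtAux
set_option synthInstance.maxHeartbeats 1000000
set_option maxHeartbeats 1000000
set_option linter.unnecessarySimpa false

abbrev F3 := ZMod 3
abbrev Rz := MvPolynomial (Fin 1) F3
abbrev Az := Polynomial Rz
local notation "Y" => (Polynomial.X : Az)
local notation "Cp" => (Polynomial.C : Rz → Az)
noncomputable def z0 : Rz := MvPolynomial.X 0
noncomputable def cA : Az := Y ^ 3 - Y * Cp z0 ^ 2
noncomputable def tau : Az →ₐ[F3] Az :=
  ((Polynomial.aeval (Y + Cp z0) : Az →ₐ[Rz] Az)).restrictScalars F3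
lemma tau_X : tau Y = Y + Cp z0 := by simp [tau]
lemma tau_C (r : Rz) : tau (Cp r) = Cp r := by simp [tau, Polynomial.algebraMap_eq]
lemma three_eq_zero : (3 : Az) = 0 := by
  have : CharP Az 3 := charP_of_injective_algebraMap' F3 (A := Az) 3
  exact_mod_cast CharP.cast_eq_zero Az 3

lemma tau_cA : tau cA = cA := by
  have h3 := three_eq_zero
  have h : tau cA = (Y + Cp z0) ^ 3 - (Y + Cp z0) * Cp z0 ^ 2 := by
    simp [cA, tau_X, tau_C, map_sub, map_pow, map_mul]
  rw [h, cA]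
  linear_combination (Y ^ 2 * Cp z0 + Y * Cp z0 ^ 2 : Az) * h3

lemma eq_sum_of_natDegree_lt_three (q : Az) (h : q.natDegree < 3) :
    q = Cp (q.coeff 0) + Cp (q.coeff 1) * Y + Cp (q.coeff 2) * Y ^ 2 := by
  apply Polynomial.ext
  intro n
  rcases n with _ | _ | _ | n
  · simp
  · simp
  · simp [Polynomial.coeff_X_pow]
  · rw [Polynomial.coeff_eq_zero_of_natDegree_lt (show q.natDegree < n+3 by omega)]
    simp [Polynomial.coeff_C, Polynomial.coeff_X, Polynomial.coeff_X_pow]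

lemma fixed_small (q : Az) (h : q.natDegree < 3) (hf : tau q = q) :
    q = Cp (q.coeff 0) := by
  have hq := eq_sum_of_natDegree_lt_three q h
  set a := q.coeff 0; set b := q.coeff 1; set d := q.coeff 2
  have htq : tau q = Cp (a + b * z0 + d * z0 ^ 2) + Cp (b + 2 * d * z0) * Y
      + Cp d * Y ^ 2 := by
    rw [hq]
    simp only [map_add, map_mul, map_pow, tau_X, tau_C, map_ofNat]
    ring
  replace hf := htq.symm.trans (hf.trans hq)
  have h1 : b + 2 * d * z0 = b := by
    have := congrArg (fun p => Polynomial.coeff p 1) hf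
    simpa [← map_pow, Polynomial.coeff_C, Polynomial.coeff_X_pow] using this
  have h0 : a + b * z0 + d * z0 ^ 2 = a := by
    have := congrArg (fun p => Polynomial.coeff p 0) hf
    simpa [← map_pow, Polynomial.coeff_C, Polynomial.coeff_X_pow] using this
  have hz0 : z0 ≠ 0 := by
    simpa [z0] using MvPolynomial.X_ne_zero (R := F3) (0 : Fin 1)
  have h3r : (3 : Rz) = 0 := by
    have : CharP Rz 3 := charP_of_injective_algebraMap' F3 (A := Rz) 3
    exact_mod_cast CharP.cast_eq_zero Rz 3
  have h2 : (2 : Rz) * d * z0 = 0 := by linear_combination h1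
  have hdz : d * z0 = 0 := by linear_combination 2 * h2 - d * z0 * h3r
  have hd : d = 0 := by
    rcases mul_eq_zero.1 hdz with h | h
    · exact h
    · exact absurd h hz0
  have hb : b = 0 := by
    have hbz : b * z0 = 0 := by
      rw [hd] at h0
      linear_combination h0
    rcases mul_eq_zero.1 hbz with h | h
    · exact h
    · exact absurd h hz0
  rw [hq, hb, hd]
  simp
lemma tau_taylor (p : Az) : tau p = Polynomial.taylor z0 p := by
  rw [Polynomial.taylor_apply, Polynomial.comp, tau]
  simp [Polynomial.aeval_def, Polynomial.algebraMap_eq, add_comm]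

lemma natDegree_tau (p : Az) : (tau p).natDegree = p.natDegree := by
  rw [tau_taylor]; exact Polynomial.natDegree_taylor p z0

lemma monic_cA : cA.Monic := by
  have h : Polynomial.degree (Y * Cp z0 ^ 2 : Az) < (3 : ℕ) := by
    apply lt_of_le_of_lt (Polynomial.degree_mul_le _ _)
    have h1 : Polynomial.degree (Y : Az) ≤ 1 := Polynomial.degree_X_le
    have h2 : Polynomial.degree ((Cp z0 : Az) ^ 2) ≤ 0 := by
      rw [← map_pow]; exact Polynomial.degree_C_le
    calc Polynomial.degree (Y : Az) + Polynomial.degree ((Cp z0 : Az) ^ 2)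
        ≤ 1 + 0 := add_le_add h1 h2
      _ < (3 : ℕ) := by norm_num
  simpa [cA] using Polynomial.monic_X_pow_sub h

lemma natDegree_cA : cA.natDegree = 3 := by
  rw [cA]; compute_degree!

lemma cA_ne_one : cA ≠ 1 := by
  intro h
  have := natDegree_cA
  rw [h] at this; simp at this

noncomputable def Sa : Subalgebra F3 Az := Algebra.adjoin F3 {Cp z0, cA}

lemma cA_mem_Sa : cA ∈ Sa := Algebra.subset_adjoin (by simp)

lemma C_mem_Sa (r : Rz) : Cp r ∈ Sa := by
  have hz : Set.range (MvPolynomial.X : Fin 1 → Rz) = {z0} := by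
    ext w
    constructor
    · rintro ⟨i, rfl⟩; fin_cases i; rfl
    · rintro rfl; exact ⟨0, rfl⟩
  have hr : r ∈ Algebra.adjoin F3 ({z0} : Set Rz) := by
    rw [← hz, adjoin_range_X]; trivial
  have hmem : Cp r ∈ (Algebra.adjoin F3 ({z0} : Set Rz)).map
      (IsScalarTower.toAlgHom F3 Rz Az) := ⟨r, hr, rfl⟩
  rw [AlgHom.map_adjoin] at hmem
  have himg : (IsScalarTower.toAlgHom F3 Rz Az) '' ({z0} : Set Rz) = {(Cp z0 : Az)} := by
    rw [Set.image_singleton]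
    rfl
  rw [himg] at hmem
  exact Algebra.adjoin_mono (by simp) hmem

lemma fixed_mem : ∀ (n : ℕ) (q : Az), q.natDegree ≤ n → tau q = q → q ∈ Sa := by
  intro n
  induction n with
  | zero =>
    intro q hq hf
    rw [fixed_small q (by omega) hf]; exact C_mem_Sa _
  | succ n ih =>
    intro q hq hf
    by_cases hsmall : q.natDegree < 3
    · rw [fixed_small q hsmall hf]; exact C_mem_Sa _
    · push_neg at hsmall
      set Q := q /ₘ cA with hQ
      set r := q %ₘ cA with hr
      have hmod : r + cA * Q = q := Polynomial.modByMonic_add_div q cA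
      have hdr : r.degree < cA.degree := Polynomial.degree_modByMonic_lt q monic_cA
      have htdeg : (tau r).degree < cA.degree := by
        rcases eq_or_ne r 0 with h0 | h0
        · rw [h0, map_zero]
          exact lt_of_le_of_lt (by simp) hdr
        · have hne : tau r ≠ 0 := by
            rw [tau_taylor]
            exact fun hh => h0 (Polynomial.taylor_injective z0 (by simpa using hh))
          rw [Polynomial.degree_eq_natDegree hne, natDegree_tau,
              ← Polynomial.degree_eq_natDegree h0]
          exact hdr
      have heq : tau r + cA * tau Q = q := by
        calc tau r + cA * tau Q = tau (r + cA * Q) := by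
              rw [map_add, map_mul, tau_cA]
          _ = tau q := by rw [hmod]
          _ = q := hf
      have huniq := Polynomial.div_modByMonic_unique (tau Q) (tau r) monic_cA ⟨heq, htdeg⟩
      have hQfix : tau Q = Q := huniq.1.symm
      have hrfix : tau r = r := huniq.2.symm
      have hQdeg : Q.natDegree ≤ n := by
        have := Polynomial.natDegree_divByMonic q monic_cA
        rw [natDegree_cA, ← hQ] at this
        omega
      have hQmem : Q ∈ Sa := ih Q hQdeg hQfix
      have hrdeg : r.natDegree < 3 := by
        have := Polynomial.natDegree_modByMonic_lt q monic_cA cA_ne_one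
        rw [natDegree_cA] at this
        exact this
      have hrmem : r ∈ Sa := by
        rw [fixed_small r hrdeg hrfix]; exact C_mem_Sa _
      rw [← hmod]
      exact Sa.add_mem hrmem (Sa.mul_mem cA_mem_Sa hQmem)

abbrev M := MvPolynomial (Fin 2) F3

noncomputable def cM : M := MvPolynomial.X 0 ^ 3 - MvPolynomial.X 0 * MvPolynomial.X 1 ^ 2

noncomputable def e3 : M ≃ₐ[F3] Az := finSuccEquiv F3 1

lemma e3_X0 : e3 (MvPolynomial.X 0) = Y := finSuccEquiv_X_zero
lemma e3_X1 : e3 (MvPolynomial.X 1) = Cp z0 := by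
  have h : (1 : Fin 2) = Fin.succ 0 := rfl
  rw [e3, h, finSuccEquiv_X_succ, z0]

lemma e3_cM : e3 cM = cA := by
  rw [cM, cA, map_sub, map_mul, map_pow, map_pow, e3_X0, e3_X1]

lemma e3_sigma (p : M) : e3 (sigmaYZ p) = tau (e3 p) := by
  have h : (e3.toAlgHom.comp sigmaYZ) = tau.comp e3.toAlgHom := by
    apply algHom_ext
    intro i
    fin_cases i <;> simp [sigmaYZ, e3_X0, e3_X1, tau_X, tau_C]
  exact congrFun (congrArg (fun f => f.toFun) h) p

lemma three_eq_zero_M : (3 : M) = 0 := by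
  have : CharP M 3 := charP_of_injective_algebraMap' F3 (A := M) 3
  exact_mod_cast CharP.cast_eq_zero M 3

lemma sigma_X1 : sigmaYZ (MvPolynomial.X 1) = MvPolynomial.X 1 := by
  simp [sigmaYZ]

lemma sigma_cM : sigmaYZ cM = cM := by
  have h3 := three_eq_zero_M
  have h : sigmaYZ cM = (MvPolynomial.X 0 + MvPolynomial.X 1) ^ 3
      - (MvPolynomial.X 0 + MvPolynomial.X 1) * MvPolynomial.X 1 ^ 2 := by
    simp [cM, sigmaYZ]
  rw [h, cM]
  linear_combination (MvPolynomial.X 0 ^ 2 * MvPolynomial.X 1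
    + MvPolynomial.X 0 * MvPolynomial.X 1 ^ 2 : M) * h3

noncomputable def SM : Subalgebra F3 M :=
  Algebra.adjoin F3 {MvPolynomial.X 1, cM}

lemma map_SM : SM.map e3.toAlgHom = Sa := by
  rw [SM, Sa, AlgHom.map_adjoin]
  congr 1
  rw [Set.image_insert_eq, Set.image_singleton]
  simp only [AlgEquiv.toAlgHom_eq_coe, AlgEquiv.coe_algHom]
  rw [e3_X1, e3_cM]

lemma forward (p : M) (hp : p ∈ SM) : sigmaYZ p = p := by
  have hle : SM ≤ (AlgHom.equalizer sigmaYZ (AlgHom.id F3 M)) := by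
    rw [SM]
    apply Algebra.adjoin_le
    rintro x (rfl | rfl)
    · exact sigma_X1
    · exact sigma_cM
  exact hle hp

lemma backward (p : M) (hp : sigmaYZ p = p) : p ∈ SM := by
  have h1 : tau (e3 p) = e3 p := by rw [← e3_sigma, hp]
  have h2 : e3 p ∈ Sa := fixed_mem (e3 p).natDegree (e3 p) le_rfl h1
  rw [← map_SM] at h2
  obtain ⟨q, hq, hqe⟩ := h2
  have : q = p := e3.injective hqe
  rwa [← this]

/- Part 2 : algebraic independence -/

lemma transcendental_cA_Rz : Transcendental Rz cA := by
  apply Polynomial.transcendental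
  · rw [natDegree_cA]; norm_num
  · rw [monic_cA.leadingCoeff]
    exact one_mem _

noncomputable def Tsub : Subalgebra F3 Az := (IsScalarTower.toAlgHom F3 Rz Az).range

noncomputable def rEquiv : Rz ≃ₐ[F3] Tsub :=
  AlgEquiv.ofInjective (IsScalarTower.toAlgHom F3 Rz Az)
    (by simpa [IsScalarTower.coe_toAlgHom'] using (Polynomial.C_injective (R := Rz)))

lemma transcendental_cA_T : Transcendental Tsub cA := by
  have hcomp : RingHom.comp (algebraMap Tsub Az) ((rEquiv : Rz ≃+* Tsub) : Rz →+* Tsub)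
      = RingHom.comp (RingHom.id Az) (algebraMap Rz Az) := RingHom.ext fun r => rfl
  rw [show cA = (RingHom.id Az) cA from rfl]
  rw [transcendental_ringHom_iff_of_comp_eq rEquiv (RingHom.id Az)
    Function.injective_id hcomp]
  exact transcendental_cA_Rz

lemma transcendental_cA_S' : Transcendental (Algebra.adjoin F3 {(Cp z0 : Az)}) cA := by
  refine Transcendental.of_tower_top_of_subalgebra_le (B := Tsub) ?_ transcendental_cA_T
  apply Algebra.adjoin_le
  rintro x rfl
  exact ⟨z0, rfl⟩

lemma map_adjoin_X1 :
    (Algebra.adjoin F3 ({MvPolynomial.X 1} : Set M)).map e3.toAlgHom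
      = Algebra.adjoin F3 {(Cp z0 : Az)} := by
  rw [AlgHom.map_adjoin, Set.image_singleton]
  simp only [AlgEquiv.toAlgHom_eq_coe, AlgEquiv.coe_algHom]
  rw [e3_X1]

noncomputable def sEquiv : (Algebra.adjoin F3 ({MvPolynomial.X 1} : Set M))
    ≃ₐ[F3] (Algebra.adjoin F3 {(Cp z0 : Az)}) :=
  (e3.subalgebraMap (Algebra.adjoin F3 ({MvPolynomial.X 1} : Set M))).trans
    (Subalgebra.equivOfEq _ _ map_adjoin_X1)

lemma transcendental_cM : Transcendental (Algebra.adjoin F3 ({MvPolynomial.X 1} : Set M)) cM := by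
  have hcomp : RingHom.comp (algebraMap (Algebra.adjoin F3 {(Cp z0 : Az)}) Az)
        ((sEquiv : (Algebra.adjoin F3 ({MvPolynomial.X 1} : Set M)) ≃+*
          (Algebra.adjoin F3 {(Cp z0 : Az)})) : _ →+* _)
      = RingHom.comp ((e3 : M ≃+* Az) : M →+* Az)
          (algebraMap (Algebra.adjoin F3 ({MvPolynomial.X 1} : Set M)) M) :=
    RingHom.ext fun s => rfl
  rw [← transcendental_ringHom_iff_of_comp_eq sEquiv (e3 : M ≃+* Az) e3.injective hcomp]
  show Transcendental _ (e3 cM)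
  rw [e3_cM]
  exact transcendental_cA_S'

lemma indep : AlgebraicIndependent F3 ![(MvPolynomial.X 1 : M), cM] := by
  have hz1 : AlgebraicIndependent F3 ![(MvPolynomial.X 1 : M)] :=
    algebraicIndependent_iff_transcendental.2 (MvPolynomial.transcendental_X F3 1)
  have hrng : Set.range ![(MvPolynomial.X 1 : M)] = {MvPolynomial.X 1} := by
    ext w
    constructor
    · rintro ⟨i, rfl⟩; fin_cases i; simp
    · rintro rfl; exact ⟨0, rfl⟩
  have hT : Transcendental (Algebra.adjoin F3 (Set.range ![(MvPolynomial.X 1 : M)])) cM := by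
    rw [hrng]; exact transcendental_cM
  have h2 : AlgebraicIndependent F3
      (fun o : Option (Fin 1) => o.elim cM ![(MvPolynomial.X 1 : M)]) :=
    (hz1.option_iff_transcendental cM).2 hT
  have h3 := h2.comp ![some 0, none] (by decide)
  have heq : (fun o : Option (Fin 1) => o.elim cM ![(MvPolynomial.X 1 : M)]) ∘ ![some 0, none]
      = ![(MvPolynomial.X 1 : M), cM] := by
    funext i
    fin_cases i <;> rfl
  rwa [heq] at h3

end StmtAux

open StmtAux in
/-- The fixed subring of `F₃[y,z]` under `y ↦ y+z, z ↦ z` is the polynomial subring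
`F₃[z, c]` where `c = y³ − y z²`; moreover `z` and `c` are algebraically independent. -/
theorem stmt2 :
    (∀ p : MvPolynomial (Fin 2) (ZMod 3),
      sigmaYZ p = p ↔ p ∈ Algebra.adjoin (ZMod 3)
        ({X 1, X 0 ^ 3 - X 0 * X 1 ^ 2} : Set (MvPolynomial (Fin 2) (ZMod 3)))) ∧
    AlgebraicIndependent (ZMod 3)
      ![(X 1 : MvPolynomial (Fin 2) (ZMod 3)), X 0 ^ 3 - X 0 * X 1 ^ 2] := by
  constructor
  · intro p
    exact ⟨backward p, forward p⟩
  · exact indep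
end

section
/- In F_3[y,z] with the automorphism σ: y ↦ y+z, z ↦ z, the space of σ-invariant homogeneous polynomials of degree n has dimension at most 1 + ⌊n/3⌋. More precisely, if p = p_0 z^n + p_1 y z^{n−1} + ... + p_n y^n is σ-invariant and i is the largest index with p_i ≠ 0, then 3 divides i. -/
open MvPolynomial

private lemma master3 (n : ℕ) (a : ℕ → ZMod 3) (i : ℕ) (hi : i ≤ n)
    (h : ∑ k ∈ Finset.range (n+1), Polynomial.C (a k) * (Polynomial.X + 1)^k
       = ∑ k ∈ Finset.range (n+1), Polynomial.C (a k) * Polynomial.X^k)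
    (ha : a i ≠ 0) (htop : ∀ j, i < j → j ≤ n → a j = 0) : 3 ∣ i := by
  rcases Nat.eq_zero_or_pos i with h0 | h0
  · simp [h0]
  obtain ⟨j, rfl⟩ : ∃ j, i = j + 1 := ⟨i - 1, by omega⟩
  have hc := congrArg (fun p => Polynomial.coeff p j) h
  simp only [Polynomial.finset_sum_coeff, Polynomial.coeff_C_mul, Polynomial.coeff_X_add_one_pow, Polynomial.coeff_X_pow] at hc
  have hL : ∑ k ∈ Finset.range (n+1), a k * ((k.choose j : ZMod 3))
      = a j + ((j+1 : ℕ) : ZMod 3) * a (j+1) := by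
    rw [show a j + ((j+1 : ℕ) : ZMod 3) * a (j+1)
        = ∑ k ∈ Finset.range (n+1), ((if k = j then a j else 0)
          + (if k = j+1 then ((j+1 : ℕ) : ZMod 3) * a (j+1) else 0)) by
      rw [Finset.sum_add_distrib, Finset.sum_ite_eq', Finset.sum_ite_eq']
      simp [Finset.mem_range, show j < n+1 by omega, show j+1 < n+1 by omega]]
    refine Finset.sum_congr rfl fun k hk => ?_
    rw [Finset.mem_range] at hk
    rcases lt_trichotomy k j with h1 | rfl | h1
    · rw [Nat.choose_eq_zero_of_lt h1]
      simp [show k ≠ j by omega, show k ≠ j+1 by omega]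
    · simp [Nat.choose_self]
    rcases Nat.eq_or_lt_of_le h1 with rfl | h2
    · simp [Nat.choose_succ_self_right, mul_comm]
    · rw [htop k h2 (by omega)]
      simp [show k ≠ j by omega, show k ≠ j+1 by omega]
  have hR : ∑ k ∈ Finset.range (n+1), a k * (if j = k then 1 else 0) = a j := by
    simp [mul_ite, Finset.sum_ite_eq, Finset.mem_range, show j < n+1 by omega]
  rw [hL, hR] at hc
  have h4 : ((j+1 : ℕ) : ZMod 3) * a (j+1) = 0 := by linear_combination hc
  rcases mul_eq_zero.mp h4 with h3 | h3
  · exact (ZMod.natCast_eq_zero_iff _ _).mp h3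
  · exact absurd h3 ha

private lemma transfer3 (n : ℕ) (a : ℕ → ZMod 3)
    (h : sigmaYZ (∑ k ∈ Finset.range (n + 1), C (a k) * X 0 ^ k * X 1 ^ (n - k)) =
        (∑ k ∈ Finset.range (n + 1), C (a k) * X 0 ^ k * X 1 ^ (n - k))) :
    ∑ k ∈ Finset.range (n+1), Polynomial.C (a k) * (Polynomial.X + 1)^k
       = ∑ k ∈ Finset.range (n+1), Polynomial.C (a k) * Polynomial.X^k := by
  have h2 := congrArg (aeval (R := ZMod 3) ![Polynomial.X, (1 : Polynomial (ZMod 3))]) h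
  simpa [sigmaYZ, map_sum, aeval_X, Polynomial.algebraMap_eq, Matrix.cons_val_zero,
    Matrix.cons_val_one, Matrix.head_cons, one_pow, mul_one] using h2

private lemma reprHom3 (n : ℕ) (p : MvPolynomial (Fin 2) (ZMod 3)) (hp : p.IsHomogeneous n) :
    p = ∑ k ∈ Finset.range (n+1),
      C (coeff (Finsupp.single 0 k + Finsupp.single 1 (n-k)) p) * X 0 ^ k * X 1 ^ (n-k) := by
  set m : ℕ → (Fin 2 →₀ ℕ) := fun k => Finsupp.single 0 k + Finsupp.single 1 (n-k) with hm
  have hterm : ∀ k, C (coeff (m k) p) * (X 0 : MvPolynomial (Fin 2) (ZMod 3)) ^ k * X 1 ^ (n-k)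
      = monomial (m k) (coeff (m k) p) := by
    intro k
    rw [X_pow_eq_monomial, X_pow_eq_monomial, C_mul_monomial, monomial_mul]; simp [hm]
  have hinj : Set.InjOn m (Finset.range (n+1)) := by
    intro x _ y _ hxy
    have := congrArg (fun f => f 0) hxy
    simpa [hm, Finsupp.single_apply] using this
  have hsub : p.support ⊆ (Finset.range (n+1)).image m := by
    intro d hd
    have hdeg : d 0 + d 1 = n := by
      have := hp (mem_support_iff.mp hd)
      simpa [Finsupp.weight_apply, Finsupp.sum_fintype, Fin.sum_univ_two] using this
    rw [Finset.mem_image]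
    refine ⟨d 0, Finset.mem_range.mpr (by omega), ?_⟩
    ext i
    fin_cases i <;> simp [hm, Finsupp.single_apply] <;> omega
  calc p = ∑ d ∈ p.support, monomial d (coeff d p) := (support_sum_monomial_coeff p).symm
    _ = ∑ d ∈ (Finset.range (n+1)).image m, monomial d (coeff d p) := by
        refine Finset.sum_subset hsub fun d _ hd => ?_
        rw [notMem_support_iff.mp hd, monomial_zero]
    _ = ∑ k ∈ Finset.range (n+1), monomial (m k) (coeff (m k) p) := Finset.sum_image hinj
    _ = _ := Finset.sum_congr rfl fun k _ => (hterm k).symm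

/-- The space of σ-invariant homogeneous polynomials of degree `n` in `F₃[y,z]` has dimension
at most `1 + ⌊n/3⌋`; more precisely, if `p = Σᵢ pᵢ yⁱ z^{n−i}` is σ-invariant and `i` is the
largest index with `pᵢ ≠ 0`, then `3 ∣ i`. -/
theorem stmt3 (n : ℕ) :
    (Module.finrank (ZMod 3)
      ↥(LinearMap.eqLocus sigmaYZ.toLinearMap LinearMap.id ⊓
          homogeneousSubmodule (Fin 2) (ZMod 3) n) ≤ 1 + n / 3) ∧
    (∀ (a : ℕ → ZMod 3) (i : ℕ), i ≤ n →
      sigmaYZ (∑ k ∈ Finset.range (n + 1), C (a k) * X 0 ^ k * X 1 ^ (n - k)) =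
        (∑ k ∈ Finset.range (n + 1), C (a k) * X 0 ^ k * X 1 ^ (n - k)) →
      a i ≠ 0 → (∀ j, i < j → j ≤ n → a j = 0) → 3 ∣ i) := by
  constructor
  · set S := LinearMap.eqLocus sigmaYZ.toLinearMap LinearMap.id ⊓
      homogeneousSubmodule (Fin 2) (ZMod 3) n with hS
    let L : S →ₗ[ZMod 3] (Fin (n/3+1) → ZMod 3) :=
      LinearMap.pi fun j => (lcoeff (ZMod 3)
        (Finsupp.single 0 (3*(j:ℕ)) + Finsupp.single 1 (n-3*(j:ℕ)))).comp S.subtype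
    have hinj : Function.Injective L := by
      rw [← LinearMap.ker_eq_bot, LinearMap.ker_eq_bot']
      rintro ⟨p, hpS⟩ hLp
      obtain ⟨hpinv, hph⟩ := Submodule.mem_inf.mp hpS
      have hph' : p.IsHomogeneous n := (mem_homogeneousSubmodule _ _).mp hph
      have hinv : sigmaYZ p = p := LinearMap.mem_eqLocus.mp hpinv
      set a : ℕ → ZMod 3 :=
        fun k => coeff (Finsupp.single 0 k + Finsupp.single 1 (n-k)) p with ha
      have hrep : p = ∑ k ∈ Finset.range (n+1), C (a k) * X 0 ^ k * X 1 ^ (n-k) :=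
        reprHom3 n p hph'
      rw [Submodule.mk_eq_zero]
      by_contra hp0
      have hex : ∃ k ∈ Finset.range (n+1), a k ≠ 0 := by
        by_contra hall
        push_neg at hall
        exact hp0 (hrep.trans (Finset.sum_eq_zero fun k hk => by rw [hall k hk]; simp))
      set T := (Finset.range (n+1)).filter (fun k => a k ≠ 0) with hT
      have hTne : T.Nonempty := by
        obtain ⟨k, hk1, hk2⟩ := hex
        exact ⟨k, Finset.mem_filter.mpr ⟨hk1, hk2⟩⟩
      set i := T.max' hTne with hi
      have hiT : i ∈ T := T.max'_mem hTne
      have hai : a i ≠ 0 := (Finset.mem_filter.mp hiT).2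
      have hile : i ≤ n :=
        Nat.lt_succ_iff.mp (Finset.mem_range.mp (Finset.mem_filter.mp hiT).1)
      have htop : ∀ j, i < j → j ≤ n → a j = 0 := by
        intro j hj1 hj2
        by_contra hj3
        have : j ∈ T := Finset.mem_filter.mpr ⟨Finset.mem_range.mpr (by omega), hj3⟩
        exact absurd (T.le_max' j this) (by omega)
      have hinv2 : sigmaYZ (∑ k ∈ Finset.range (n + 1), C (a k) * X 0 ^ k * X 1 ^ (n - k)) =
          (∑ k ∈ Finset.range (n + 1), C (a k) * X 0 ^ k * X 1 ^ (n - k)) := by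
        rw [← hrep]; exact hinv
      obtain ⟨j, hij⟩ := master3 n a i hile (transfer3 n a hinv2) hai htop
      have hj : j < n/3 + 1 := by omega
      have hz := congrFun hLp ⟨j, hj⟩
      simp only [L, LinearMap.pi_apply, LinearMap.comp_apply, Submodule.subtype_apply,
        lcoeff_apply, Pi.zero_apply] at hz
      exact hai (by rw [hij]; exact hz)
    calc Module.finrank (ZMod 3) S
        ≤ Module.finrank (ZMod 3) (Fin (n/3+1) → ZMod 3) :=
          LinearMap.finrank_le_finrank_of_injective hinj
      _ = n/3 + 1 := Module.finrank_fin_fun _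
      _ = 1 + n/3 := by omega
  · intro a i hi h hai htop
    exact master3 n a i hi (transfer3 n a h) hai htop
end

section
/- Consider the F_3-vector space F_3[a] (polynomials in one variable) with the operator D = a^3·(d/da) + ε·a^2 for ε ∈ F_3, i.e., D(a^i) = (i + ε)·a^{i+2}. Then D^3 = 0, and: for ε = 0 the module F_3[a] over F_3[D]/(D^3) decomposes with non-free summands exactly span{a^0} and span{a^1, a^3}; for ε = 1 the unique non-free summand is span{a^0, a^2}; for ε = −1 the unique non-free summand is span{a^1}. -/
open Polynomial

/-- The operator `D = a³·(d/da) + ε·a²` on `F₃[a]`, i.e. `D(aⁱ) = (i + ε)·a^{i+2}`. -/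
noncomputable def Dop (ε : ZMod 3) : Polynomial (ZMod 3) →ₗ[ZMod 3] Polynomial (ZMod 3) :=
  (LinearMap.mulLeft (ZMod 3) (X ^ 3)).comp
      (derivative : Polynomial (ZMod 3) →ₗ[ZMod 3] Polynomial (ZMod 3)) +
    ε • LinearMap.mulLeft (ZMod 3) (X ^ 2)

/-- `W` is a `D`-invariant submodule which is a free `F₃[D]/(D³)`-module
(for `D³ = 0`, freeness is the exactness condition `ker D ∩ W ⊆ D²(W)`). -/
def IsFreeInvariant (D : Polynomial (ZMod 3) →ₗ[ZMod 3] Polynomial (ZMod 3))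
    (W : Submodule (ZMod 3) (Polynomial (ZMod 3))) : Prop :=
  (∀ w ∈ W, D w ∈ W) ∧ ∀ w ∈ W, D w = 0 → ∃ u ∈ W, D (D u) = w

lemma Dop_apply (ε : ZMod 3) (p : Polynomial (ZMod 3)) :
    Dop ε p = X ^ 3 * derivative p + C ε * (X ^ 2 * p) := by
  simp [Dop, smul_eq_C_mul]

lemma coeff_Dop (ε : ZMod 3) (p : Polynomial (ZMod 3)) (n : ℕ) :
    (Dop ε p).coeff (n + 2) = ((n : ZMod 3) + ε) * p.coeff n := by
  rw [Dop_apply, mul_comm (X^3 : Polynomial (ZMod 3)), coeff_add, coeff_mul_X_pow',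
    coeff_C_mul, mul_comm (X^2 : Polynomial (ZMod 3)), coeff_mul_X_pow']
  cases n with
  | zero => simp
  | succ m =>
    have h3 : 3 ≤ m + 1 + 2 := by omega
    have h2 : 2 ≤ m + 1 + 2 := by omega
    rw [if_pos h3, if_pos h2, show m + 1 + 2 - 3 = m by omega,
      show m + 1 + 2 - 2 = m + 1 by omega, coeff_derivative]
    push_cast; ring

lemma coeff_Dop_zero (ε : ZMod 3) (p : Polynomial (ZMod 3)) : (Dop ε p).coeff 0 = 0 := by
  rw [Dop_apply, mul_comm (X^3 : Polynomial (ZMod 3)), coeff_add, coeff_mul_X_pow',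
    coeff_C_mul, mul_comm (X^2 : Polynomial (ZMod 3)), coeff_mul_X_pow']
  simp

lemma coeff_Dop_one (ε : ZMod 3) (p : Polynomial (ZMod 3)) : (Dop ε p).coeff 1 = 0 := by
  rw [Dop_apply, mul_comm (X^3 : Polynomial (ZMod 3)), coeff_add, coeff_mul_X_pow',
    coeff_C_mul, mul_comm (X^2 : Polynomial (ZMod 3)), coeff_mul_X_pow']
  simp

lemma Dop_CX (ε a : ZMod 3) (m : ℕ) :
    Dop ε (C a * X ^ m) = C (a * ((m : ZMod 3) + ε)) * X ^ (m + 2) := by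
  ext n
  match n with
  | 0 => rw [coeff_Dop_zero, coeff_C_mul, coeff_X_pow, if_neg (by omega : ¬0 = m + 2), mul_zero]
  | 1 => rw [coeff_Dop_one, coeff_C_mul, coeff_X_pow, if_neg (by omega : ¬1 = m + 2), mul_zero]
  | (k+2) =>
    rw [coeff_Dop, coeff_C_mul, coeff_X_pow, coeff_C_mul, coeff_X_pow]
    by_cases h : k = m
    · subst h; simp; ring
    · rw [if_neg h, if_neg (by omega)]; ring

lemma Dop2_CX (ε a : ZMod 3) (m : ℕ) :
    Dop ε (Dop ε (C a * X ^ m)) =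
      C (a * ((m : ZMod 3) + ε) * ((m : ZMod 3) + 2 + ε)) * X ^ (m + 4) := by
  rw [Dop_CX, Dop_CX]
  push_cast
  ring_nf

lemma free_helper (ε : ZMod 3) (w : Polynomial (ZMod 3))
    (h4 : ∀ n ∈ w.support, 4 ≤ n) (hr : ∀ n ∈ w.support, (n : ZMod 3) = -ε) :
    ∃ u : Polynomial (ZMod 3),
      (∀ j, u.coeff j ≠ 0 → (j + 4) ∈ w.support) ∧ Dop ε (Dop ε u) = w := by
  refine ⟨∑ n ∈ w.support, C (2 * w.coeff n) * X ^ (n - 4), ?_, ?_⟩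
  · intro j hj
    rw [finset_sum_coeff] at hj
    obtain ⟨n, hn, hne⟩ := Finset.exists_ne_zero_of_sum_ne_zero hj
    rw [coeff_C_mul, coeff_X_pow] at hne
    have : j = n - 4 := by by_contra h; simp [h] at hne
    have := h4 n hn
    have : n = j + 4 := by omega
    rwa [this] at hn
  · rw [map_sum, map_sum]
    conv_rhs => rw [w.as_sum_support]
    refine Finset.sum_congr rfl fun n hn => ?_
    rw [Dop2_CX]
    have h4n := h4 n hn
    have hrn := hr n hn
    have hc : ((n - 4 : ℕ) : ZMod 3) = (n : ZMod 3) - 4 := by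
      push_cast [Nat.cast_sub (by omega : 4 ≤ n)]; ring
    rw [hc, hrn, show n - 4 + 4 = n by omega, ← C_mul_X_pow_eq_monomial]
    congr 1
    have key : ∀ e c : ZMod 3, 2 * c * (-e - 4 + e) * (-e - 4 + 2 + e) = c := by decide
    rw [key]

lemma Dop_cube (ε : ZMod 3) (p : Polynomial (ZMod 3)) : Dop ε (Dop ε (Dop ε p)) = 0 := by
  ext n
  match n with
  | 0 => simp [coeff_Dop_zero]
  | 1 => simp [coeff_Dop_one]
  | (k+2) =>
    rw [coeff_Dop]
    match k with
    | 0 => simp [coeff_Dop_zero]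
    | 1 => simp [coeff_Dop_one]
    | (j+2) =>
      rw [coeff_Dop]
      match j with
      | 0 => simp [coeff_Dop_zero]
      | 1 => simp [coeff_Dop_one]
      | (i+2) =>
        rw [coeff_Dop, coeff_zero]
        have h : ∀ x y : ZMod 3, (x + 4 + y) * ((x + 2 + y) * (x + y)) = 0 := by decide
        push_cast
        calc ((i:ZMod 3) + 2 + 2 + ε) * (((i:ZMod 3) + 2 + ε) * (((i:ZMod 3) + ε) * p.coeff i))
            = ((i:ZMod 3) + 4 + ε) * (((i:ZMod 3) + 2 + ε) * ((i:ZMod 3) + ε)) * p.coeff i := by ring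
          _ = 0 := by rw [h]; ring

noncomputable def Wset (S : Set ℕ) : Submodule (ZMod 3) (Polynomial (ZMod 3)) where
  carrier := {p | ∀ j ∈ S, p.coeff j = 0}
  add_mem' := by intro a b ha hb j hj; simp [ha j hj, hb j hj]
  zero_mem' := by intro j hj; simp
  smul_mem' := by intro c p hp j hj; simp [hp j hj]
lemma mem_Wset {S : Set ℕ} {p : Polynomial (ZMod 3)} :
    p ∈ Wset S ↔ ∀ j ∈ S, p.coeff j = 0 := Iff.rfl


lemma supp_mod (ε : ZMod 3) (w : Polynomial (ZMod 3)) (hD : Dop ε w = 0) :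
    ∀ n ∈ w.support, n % 3 = (-ε).val := by
  intro n hn
  have h := congrArg (fun q => coeff q (n + 2)) hD
  simp only [coeff_Dop, coeff_zero] at h
  have hne : w.coeff n ≠ 0 := mem_support_iff.mp hn
  have h2 : (n : ZMod 3) + ε = 0 := by
    rcases mul_eq_zero.mp h with h' | h'
    · exact h'
    · exact absurd h' hne
  have h3 : (n : ZMod 3) = -ε := eq_neg_of_add_eq_zero_left h2
  calc n % 3 = ((n : ZMod 3)).val := (ZMod.val_natCast (n := 3) n).symm
    _ = (-ε).val := by rw [h3]


lemma Dop_X_pow (ε : ZMod 3) (m : ℕ) :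
    Dop ε (X ^ m : Polynomial (ZMod 3)) = C ((m : ZMod 3) + ε) * X ^ (m + 2) := by
  have := Dop_CX ε 1 m
  simpa using this


lemma cast_of_mod (n : ℕ) (r : ℕ) (h : n % 3 = r) : (n : ZMod 3) = (r : ZMod 3) := by
  conv_lhs => rw [show n = 3 * (n / 3) + r by omega]
  push_cast
  rw [show ((3:ZMod 3)) = 0 by decide, zero_mul, zero_add]


lemma part2 :
    (IsFreeInvariant (Dop (-1)) (Wset {1}) ∧
      (∀ w ∈ Submodule.span (ZMod 3) ({X} : Set (Polynomial (ZMod 3))), Dop (-1) w ∈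
        Submodule.span (ZMod 3) ({X} : Set (Polynomial (ZMod 3)))) ∧
      Wset {1} ⊓ Submodule.span (ZMod 3) ({X} : Set (Polynomial (ZMod 3))) = ⊥ ∧
      Wset {1} ⊔ Submodule.span (ZMod 3) ({X} : Set (Polynomial (ZMod 3))) = ⊤) := by
  refine ⟨⟨?_, ?_⟩, ?_, ?_, ?_⟩
  · intro w hw
    rw [mem_Wset]
    rintro j rfl
    exact coeff_Dop_one (-1) w
  · intro w hw hD
    rw [mem_Wset] at hw
    have hmod := supp_mod (-1) w hD
    have hval : ((-(-1) : ZMod 3)).val = 1 := by decide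
    have h4 : ∀ n ∈ w.support, 4 ≤ n := by
      intro n hn
      have h1 := hmod n hn; rw [hval] at h1
      have h2 : n ≠ 1 := by
        intro h; subst h; exact mem_support_iff.mp hn (hw 1 (by simp))
      omega
    have hr : ∀ n ∈ w.support, (n : ZMod 3) = -(-1) := by
      intro n hn
      have h1 := hmod n hn; rw [hval] at h1
      rw [cast_of_mod n 1 h1]; decide
    obtain ⟨u, hu, hDu⟩ := free_helper (-1) w h4 hr
    refine ⟨u, ?_, hDu⟩
    rw [mem_Wset]
    rintro j rfl
    by_contra h
    have := hmod _ (hu 1 h)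
    rw [hval] at this
    omega
  · intro w hw
    rw [Submodule.mem_span_singleton] at hw ⊢
    obtain ⟨c, rfl⟩ := hw
    refine ⟨0, ?_⟩
    have e1 : Dop (-1) (X : Polynomial (ZMod 3)) = 0 := by
      have := Dop_X_pow (-1) 1
      rw [pow_one] at this
      rw [this, show ((1:ℕ) : ZMod 3) + (-1) = 0 by decide]
      simp
    rw [map_smul, e1, smul_zero, zero_smul]
  · rw [eq_bot_iff]
    intro p hp
    rw [Submodule.mem_inf] at hp
    obtain ⟨hW, hS⟩ := hp
    rw [mem_Wset] at hW
    rw [Submodule.mem_span_singleton] at hS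
    obtain ⟨c, rfl⟩ := hS
    have h1 := hW 1 (by simp)
    simp [smul_eq_C_mul, coeff_X] at h1
    simp [h1]
  · rw [eq_top_iff]
    intro p _
    rw [Submodule.mem_sup]
    refine ⟨p - C (p.coeff 1) * X, ?_, C (p.coeff 1) * X, ?_, by ring⟩
    · rw [mem_Wset]
      rintro j rfl
      simp [coeff_X]
    · rw [Submodule.mem_span_singleton]
      exact ⟨p.coeff 1, by simp [smul_eq_C_mul]⟩

lemma part0 :
    (IsFreeInvariant (Dop 0) (Wset {0, 1, 3}) ∧
      (∀ w ∈ Submodule.span (ZMod 3) ({1} : Set (Polynomial (ZMod 3))), Dop 0 w ∈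
        Submodule.span (ZMod 3) ({1} : Set (Polynomial (ZMod 3)))) ∧
      (∀ w ∈ Submodule.span (ZMod 3) ({X, X ^ 3} : Set (Polynomial (ZMod 3))), Dop 0 w ∈
        Submodule.span (ZMod 3) ({X, X ^ 3} : Set (Polynomial (ZMod 3)))) ∧
      Submodule.span (ZMod 3) ({1} : Set (Polynomial (ZMod 3))) ⊓
        Submodule.span (ZMod 3) ({X, X ^ 3} : Set (Polynomial (ZMod 3))) = ⊥ ∧
      Wset {0, 1, 3} ⊓ (Submodule.span (ZMod 3) ({1} : Set (Polynomial (ZMod 3))) ⊔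
        Submodule.span (ZMod 3) ({X, X ^ 3} : Set (Polynomial (ZMod 3)))) = ⊥ ∧
      Wset {0, 1, 3} ⊔ (Submodule.span (ZMod 3) ({1} : Set (Polynomial (ZMod 3))) ⊔
        Submodule.span (ZMod 3) ({X, X ^ 3} : Set (Polynomial (ZMod 3)))) = ⊤) := by
  refine ⟨⟨?_, ?_⟩, ?_, ?_, ?_, ?_, ?_⟩
  · intro w hw
    rw [mem_Wset] at hw ⊢
    rintro j (rfl | rfl | rfl)
    · exact coeff_Dop_zero 0 w
    · exact coeff_Dop_one 0 w
    · have h := coeff_Dop 0 w 1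
      rw [show (1:ℕ) + 2 = 3 from rfl] at h
      rw [h, hw 1 (by simp), mul_zero]
  · intro w hw hD
    rw [mem_Wset] at hw
    have hmod := supp_mod 0 w hD
    have hval : ((-0 : ZMod 3)).val = 0 := by decide
    have h4 : ∀ n ∈ w.support, 4 ≤ n := by
      intro n hn
      have h1 := hmod n hn; rw [hval] at h1
      have h2 : n ≠ 0 := by
        intro h; subst h; exact mem_support_iff.mp hn (hw 0 (by simp))
      have h3 : n ≠ 3 := by
        intro h; subst h; exact mem_support_iff.mp hn (hw 3 (by simp))
      omega
    have hr : ∀ n ∈ w.support, (n : ZMod 3) = -0 := by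
      intro n hn
      have h1 := hmod n hn; rw [hval] at h1
      rw [cast_of_mod n 0 h1]; decide
    obtain ⟨u, hu, hDu⟩ := free_helper 0 w h4 hr
    refine ⟨u, ?_, hDu⟩
    rw [mem_Wset]
    rintro j (rfl | rfl | rfl) <;> by_contra h <;>
      [(have := hmod _ (hu 0 h)); (have := hmod _ (hu 1 h)); (have := hmod _ (hu 3 h))] <;>
      rw [hval] at this <;> omega
  · intro w hw
    rw [Submodule.mem_span_singleton] at hw ⊢
    obtain ⟨c, rfl⟩ := hw
    refine ⟨0, ?_⟩
    have e1 : Dop 0 (1 : Polynomial (ZMod 3)) = 0 := by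
      have := Dop_X_pow 0 0
      rw [pow_zero] at this
      rw [this, show ((0:ℕ) : ZMod 3) + 0 = 0 by decide]
      simp
    rw [map_smul, e1, smul_zero, zero_smul]
  · intro w hw
    rw [Submodule.mem_span_pair] at hw ⊢
    obtain ⟨x, y, rfl⟩ := hw
    refine ⟨0, x, ?_⟩
    have e1 : Dop 0 (X : Polynomial (ZMod 3)) = X ^ 3 := by
      have := Dop_X_pow 0 1
      rw [pow_one] at this
      rw [this, show ((1:ℕ) : ZMod 3) + 0 = 1 by decide]
      simp
    have e2 : Dop 0 (X ^ 3 : Polynomial (ZMod 3)) = 0 := by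
      have := Dop_X_pow 0 3
      rw [this, show ((3:ℕ) : ZMod 3) + 0 = 0 by decide]
      simp
    rw [map_add, map_smul, map_smul, e1, e2, smul_zero, add_zero, zero_smul, zero_add]
  · rw [eq_bot_iff]
    intro p hp
    rw [Submodule.mem_inf] at hp
    obtain ⟨h1, h2⟩ := hp
    rw [Submodule.mem_span_singleton] at h1
    rw [Submodule.mem_span_pair] at h2
    obtain ⟨c, rfl⟩ := h1
    obtain ⟨x, y, hxy⟩ := h2
    have h0 := congrArg (fun q => coeff q 0) hxy
    simp [smul_eq_C_mul, coeff_X, coeff_X_pow] at h0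
    simp [← h0]
  · rw [eq_bot_iff]
    intro p hp
    rw [Submodule.mem_inf] at hp
    obtain ⟨hW, hS⟩ := hp
    rw [mem_Wset] at hW
    rw [Submodule.mem_sup] at hS
    obtain ⟨a, ha, b, hb, hab⟩ := hS
    rw [Submodule.mem_span_singleton] at ha
    rw [Submodule.mem_span_pair] at hb
    obtain ⟨c, rfl⟩ := ha
    obtain ⟨x, y, rfl⟩ := hb
    have h0 := hW 0 (by simp)
    have h1 := hW 1 (by simp)
    have h3 := hW 3 (by simp)
    rw [← hab] at h0 h1 h3 ⊢
    simp [smul_eq_C_mul, coeff_X, coeff_X_pow] at h0 h1 h3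
    simp [h0, h1, h3]
  · rw [eq_top_iff]
    intro p _
    rw [Submodule.mem_sup]
    refine ⟨p - C (p.coeff 0) - C (p.coeff 1) * X - C (p.coeff 3) * X ^ 3, ?_,
      C (p.coeff 0) + (C (p.coeff 1) * X + C (p.coeff 3) * X ^ 3), ?_, by ring⟩
    · rw [mem_Wset]
      rintro j (rfl | rfl | rfl) <;> simp [coeff_C, coeff_X, coeff_X_pow]
    · rw [Submodule.mem_sup]
      refine ⟨C (p.coeff 0), ?_, C (p.coeff 1) * X + C (p.coeff 3) * X ^ 3, ?_, rfl⟩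
      · rw [Submodule.mem_span_singleton]
        exact ⟨p.coeff 0, by simp [smul_eq_C_mul]⟩
      · rw [Submodule.mem_span_pair]
        exact ⟨p.coeff 1, p.coeff 3, by simp [smul_eq_C_mul]⟩

lemma part1 :
    (IsFreeInvariant (Dop 1) (Wset {0, 2}) ∧
      (∀ w ∈ Submodule.span (ZMod 3) ({1, X ^ 2} : Set (Polynomial (ZMod 3))), Dop 1 w ∈
        Submodule.span (ZMod 3) ({1, X ^ 2} : Set (Polynomial (ZMod 3)))) ∧
      Wset {0, 2} ⊓ Submodule.span (ZMod 3) ({1, X ^ 2} : Set (Polynomial (ZMod 3))) = ⊥ ∧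
      Wset {0, 2} ⊔ Submodule.span (ZMod 3) ({1, X ^ 2} : Set (Polynomial (ZMod 3))) = ⊤) := by
  refine ⟨⟨?_, ?_⟩, ?_, ?_, ?_⟩
  · -- invariance of W
    intro w hw
    rw [mem_Wset] at hw ⊢
    rintro j (rfl | rfl)
    · exact coeff_Dop_zero 1 w
    · rw [show (2:ℕ) = 0 + 2 by rfl, coeff_Dop]
      simp [hw 0 (by simp)]
  · -- freeness
    intro w hw hD
    rw [mem_Wset] at hw
    have hmod := supp_mod 1 w hD
    have hval : ((-1 : ZMod 3)).val = 2 := by decide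
    have h4 : ∀ n ∈ w.support, 4 ≤ n := by
      intro n hn
      have h1 := hmod n hn; rw [hval] at h1
      have h2 : n ≠ 2 := by
        intro h; subst h; exact mem_support_iff.mp hn (hw 2 (by simp))
      omega
    have hr : ∀ n ∈ w.support, (n : ZMod 3) = -1 := by
      intro n hn
      have h1 := hmod n hn; rw [hval] at h1
      have : n % 3 = 2 := h1
      conv_lhs => rw [show n = 3 * (n / 3) + n % 3 by omega]
      push_cast [this]
      rw [show ((3:ZMod 3)) = 0 by decide, zero_mul, zero_add]
      decide
    obtain ⟨u, hu, hDu⟩ := free_helper 1 w h4 hr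
    refine ⟨u, ?_, hDu⟩
    rw [mem_Wset]
    rintro j (rfl | rfl) <;> by_contra h <;>
      [(have := hmod _ (hu 0 h)); (have := hmod _ (hu 2 h))] <;>
      rw [hval] at this <;> omega
  · -- invariance of span
    intro w hw
    rw [Submodule.mem_span_pair] at hw ⊢
    obtain ⟨x, y, rfl⟩ := hw
    refine ⟨0, x, ?_⟩
    have e1 : Dop 1 (1 : Polynomial (ZMod 3)) = X ^ 2 := by
      have := Dop_X_pow 1 0; simpa using this
    have e2 : Dop 1 (X ^ 2 : Polynomial (ZMod 3)) = 0 := by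
      have := Dop_X_pow 1 2
      rw [this]
      norm_num
      decide
    rw [map_add, map_smul, map_smul, e1, e2, smul_zero, add_zero, zero_smul, zero_add]
  · -- inf = bot
    rw [eq_bot_iff]
    intro p hp
    rw [Submodule.mem_inf] at hp
    obtain ⟨hW, hS⟩ := hp
    rw [mem_Wset] at hW
    rw [Submodule.mem_span_pair] at hS
    obtain ⟨x, y, rfl⟩ := hS
    have h0 := hW 0 (by simp)
    have h2 := hW 2 (by simp)
    simp [smul_eq_C_mul, coeff_C, coeff_X_pow] at h0 h2
    simp [h0, h2]
  · -- sup = top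
    rw [eq_top_iff]
    intro p _
    rw [Submodule.mem_sup]
    refine ⟨p - C (p.coeff 0) - C (p.coeff 2) * X ^ 2, ?_, C (p.coeff 0) + C (p.coeff 2) * X ^ 2, ?_, by ring⟩
    · rw [mem_Wset]
      rintro j (rfl | rfl) <;> simp [coeff_C, coeff_X_pow]
    · rw [Submodule.mem_span_pair]
      exact ⟨p.coeff 0, p.coeff 2, by simp [smul_eq_C_mul]⟩

/-- `D = a³ d/da + ε a²` satisfies `D³ = 0`, and the decomposition of `F₃[a]` into
indecomposable `F₃[D]/(D³)`-modules has non-free summands exactly: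
`span{1}` and `span{a, a³}` for `ε = 0`; `span{1, a²}` for `ε = 1`; `span{a}` for `ε = −1`. -/
theorem stmt5 :
    (∀ ε : ZMod 3, ∀ p, Dop ε (Dop ε (Dop ε p)) = 0) ∧
    (∃ W, IsFreeInvariant (Dop 0) W ∧
      (∀ w ∈ Submodule.span (ZMod 3) ({1} : Set (Polynomial (ZMod 3))), Dop 0 w ∈
        Submodule.span (ZMod 3) ({1} : Set (Polynomial (ZMod 3)))) ∧
      (∀ w ∈ Submodule.span (ZMod 3) ({X, X ^ 3} : Set (Polynomial (ZMod 3))), Dop 0 w ∈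
        Submodule.span (ZMod 3) ({X, X ^ 3} : Set (Polynomial (ZMod 3)))) ∧
      Submodule.span (ZMod 3) ({1} : Set (Polynomial (ZMod 3))) ⊓
        Submodule.span (ZMod 3) ({X, X ^ 3} : Set (Polynomial (ZMod 3))) = ⊥ ∧
      W ⊓ (Submodule.span (ZMod 3) ({1} : Set (Polynomial (ZMod 3))) ⊔
        Submodule.span (ZMod 3) ({X, X ^ 3} : Set (Polynomial (ZMod 3)))) = ⊥ ∧
      W ⊔ (Submodule.span (ZMod 3) ({1} : Set (Polynomial (ZMod 3))) ⊔
        Submodule.span (ZMod 3) ({X, X ^ 3} : Set (Polynomial (ZMod 3)))) = ⊤) ∧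
    (∃ W, IsFreeInvariant (Dop 1) W ∧
      (∀ w ∈ Submodule.span (ZMod 3) ({1, X ^ 2} : Set (Polynomial (ZMod 3))), Dop 1 w ∈
        Submodule.span (ZMod 3) ({1, X ^ 2} : Set (Polynomial (ZMod 3)))) ∧
      W ⊓ Submodule.span (ZMod 3) ({1, X ^ 2} : Set (Polynomial (ZMod 3))) = ⊥ ∧
      W ⊔ Submodule.span (ZMod 3) ({1, X ^ 2} : Set (Polynomial (ZMod 3))) = ⊤) ∧
    (∃ W, IsFreeInvariant (Dop (-1)) W ∧
      (∀ w ∈ Submodule.span (ZMod 3) ({X} : Set (Polynomial (ZMod 3))), Dop (-1) w ∈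
        Submodule.span (ZMod 3) ({X} : Set (Polynomial (ZMod 3)))) ∧
      W ⊓ Submodule.span (ZMod 3) ({X} : Set (Polynomial (ZMod 3))) = ⊥ ∧
      W ⊔ Submodule.span (ZMod 3) ({X} : Set (Polynomial (ZMod 3))) = ⊤) := by
  exact ⟨fun ε p => Dop_cube ε p, ⟨Wset {0, 1, 3}, part0.1, part0.2.1, part0.2.2.1, part0.2.2.2.1, part0.2.2.2.2.1, part0.2.2.2.2.2⟩, ⟨Wset {0, 2}, part1.1, part1.2.1, part1.2.2.1, part1.2.2.2⟩, ⟨Wset {1}, part2.1, part2.2.1, part2.2.2.1, part2.2.2.2⟩⟩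
end
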